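/- Every finite metacyclic p-group with p an odd prime is powerful. -/

import Mathlib

/-- Every finite metacyclic `p`-group with `p` odd is powerful: if `P` has a
cyclic normal subgroup `C` with cyclic quotient, then `[P,P] ≤ Pᵖ`. -/
theorem stmt16 {P : Type*} [Group P] [Fintype P] (p : ℕ) [Fact p.Prime]
    (hodd : Odd p) (hP : IsPGroup p P)
    (C : Subgroup P) [C.Normal] (hC : IsCyclic C) (hquot : IsCyclic (P ⧸ C)) :
    ⁅(⊤ : Subgroup P), (⊤ : Subgroup P)⁆ ≤
      Subgroup.closure {y : P | ∃ x : P, y = x ^ p} := by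
  have hp : p.Prime := Fact.out
  set N := Subgroup.closure {y : P | ∃ x : P, y = x ^ p} with hNdef
  haveI hNnormal : N.Normal := by
    constructor
    intro n hn g
    induction hn using Subgroup.closure_induction with
    | mem x hx =>
      obtain ⟨y, rfl⟩ := hx
      exact Subgroup.subset_closure ⟨g * y * g⁻¹, by rw [conj_pow]⟩
    | one => simpa using N.one_mem
    | mul a b _ _ ha hb =>
      have := N.mul_mem ha hb
      have heq : g * (a * b) * g⁻¹ = (g * a * g⁻¹) * (g * b * g⁻¹) := by group
      rwa [heq]
    | inv a _ ha =>
      have := N.inv_mem ha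
      have heq : g * a⁻¹ * g⁻¹ = (g * a * g⁻¹)⁻¹ := by group
      rwa [heq]
  -- the quotient Q = P / N has exponent dividing p
  have hexp : ∀ q : P ⧸ N, q ^ p = 1 := by
    intro q
    obtain ⟨x, rfl⟩ := QuotientGroup.mk_surjective q
    show ((QuotientGroup.mk' N) x) ^ p = 1
    rw [← map_pow]
    exact (QuotientGroup.eq_one_iff _).2 (Subgroup.subset_closure ⟨x, rfl⟩)
  set Cbar := C.map (QuotientGroup.mk' N) with hCbardef
  haveI : IsCyclic C := hC
  haveI hCbarCyc : IsCyclic Cbar :=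
    isCyclic_of_surjective ((QuotientGroup.mk' N).subgroupMap C)
      ((QuotientGroup.mk' N).subgroupMap_surjective C)
  have hCbarCard : Nat.card Cbar ∣ p := by
    rw [← IsCyclic.exponent_eq_card]
    exact Monoid.exponent_dvd_of_forall_pow_eq_one fun g => by
      ext
      push_cast
      exact hexp (g : P ⧸ N)
  -- the quotient of Q by Cbar is cyclic (image of P ⧸ C) of order dividing p
  haveI : Cbar.Normal := Subgroup.Normal.map ‹C.Normal› _ (QuotientGroup.mk'_surjective N)
  have hker : C ≤ ((QuotientGroup.mk' Cbar).comp (QuotientGroup.mk' N)).ker := by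
    intro c hc
    simp only [MonoidHom.mem_ker, MonoidHom.comp_apply]
    rw [QuotientGroup.mk'_apply, QuotientGroup.eq_one_iff]
    exact Subgroup.mem_map_of_mem _ hc
  set f := QuotientGroup.lift C ((QuotientGroup.mk' Cbar).comp (QuotientGroup.mk' N)) hker
    with hfdef
  have hfsurj : Function.Surjective f := by
    intro q
    obtain ⟨x, rfl⟩ := QuotientGroup.mk_surjective q
    obtain ⟨y, rfl⟩ := QuotientGroup.mk_surjective x
    exact ⟨QuotientGroup.mk y, rfl⟩
  haveI hQcyc : IsCyclic ((P ⧸ N) ⧸ Cbar) := isCyclic_of_surjective f hfsurj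
  have hQcard : Nat.card ((P ⧸ N) ⧸ Cbar) ∣ p := by
    rw [← IsCyclic.exponent_eq_card]
    refine Monoid.exponent_dvd_of_forall_pow_eq_one fun g => ?_
    obtain ⟨x, rfl⟩ := QuotientGroup.mk_surjective g
    show ((QuotientGroup.mk' Cbar) x) ^ p = 1
    rw [← map_pow, hexp x, map_one]
  -- hence |P ⧸ N| divides p ^ 2
  have hcard : Nat.card (P ⧸ N) ∣ p ^ 2 := by
    rw [Subgroup.card_eq_card_quotient_mul_card_subgroup Cbar, sq]
    exact mul_dvd_mul hQcard hCbarCard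
  -- a p-group of order dividing p² is commutative
  have hcomm : ∀ a b : P ⧸ N, a * b = b * a := by
    obtain ⟨k, hk⟩ := IsPGroup.iff_card.1 (hP.to_quotient N)
    rw [hk] at hcard
    have hk2 : k ≤ 2 := (Nat.pow_dvd_pow_iff_le_right hp.one_lt).1 hcard
    interval_cases k
    · have h1 : Nat.card (P ⧸ N) = 1 := by simpa using hk
      haveI := (Nat.card_eq_one_iff_unique.1 h1).1
      intro a b
      exact Subsingleton.elim _ _
    · haveI : IsCyclic (P ⧸ N) := isCyclic_of_prime_card (p := p) (by simpa using hk)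
      exact fun a b => (IsCyclic.commGroup (α := P ⧸ N)).mul_comm a b
    · exact IsPGroup.commutative_of_card_eq_prime_sq hk
  -- conclude
  rw [Subgroup.commutator_le]
  intro a _ b _
  open scoped commutatorElement in
  have h1 : (QuotientGroup.mk' N) ⁅a, b⁆ = 1 := by
    rw [map_commutatorElement, commutatorElement_eq_one_iff_mul_comm]
    exact hcomm _ _
  exact (QuotientGroup.eq_one_iff _).1 h1
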